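/- For all n ≥ 0, ∑_{k=0}^n C(2n+1, n-k) L_{2k+1}(x) = x^{2n+1}, where L_m(x) are the special Lucas polynomials. -/

import Mathlib

open Finset Polynomial

lemma auxA (L : ℕ → Polynomial ℚ)
    (h1 : L 1 = X) (h2 : L 2 = X ^ 2 - 2)
    (hrec : ∀ n, L (n + 3) = X * L (n + 2) - L (n + 1))
    (y : ℂ) (hy : y ≠ 0) :
    ∀ m, aeval (y + y⁻¹) (L (m + 1)) = y ^ (m + 1) + y⁻¹ ^ (m + 1) := by
  intro m
  induction m using Nat.twoStepInduction with
  | zero => simp [h1]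
  | one =>
    rw [h2]
    simp only [map_sub, map_pow, aeval_X, map_ofNat]
    linear_combination (2 : ℂ) * mul_inv_cancel₀ hy
  | more m ih1 ih2 =>
    rw [show m + 2 + 1 = m + 3 from rfl, hrec m]
    simp only [map_sub, map_mul, aeval_X, ih1, ih2]
    linear_combination (y ^ (m + 1) + y⁻¹ ^ (m + 1)) * mul_inv_cancel₀ hy

lemma auxB (y : ℂ) (hy : y ≠ 0) (n : ℕ) :
    ∑ k ∈ range (n + 1), (((2 * n + 1).choose (n - k) : ℚ) : ℂ) *
      (y ^ (2 * k + 1) + y⁻¹ ^ (2 * k + 1)) = (y + y⁻¹) ^ (2 * n + 1) := by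
  have hinv : y * y⁻¹ = 1 := mul_inv_cancel₀ hy
  rw [add_pow]
  have h2 : 2 * n + 1 + 1 = 2 * n + 2 := by ring
  rw [h2]
  have hsplit : ∑ j ∈ range (2 * n + 2), y ^ j * y⁻¹ ^ (2 * n + 1 - j) * ((2 * n + 1).choose j : ℂ)
      = ∑ j ∈ range (n + 1), y ^ j * y⁻¹ ^ (2 * n + 1 - j) * ((2 * n + 1).choose j : ℂ)
        + ∑ j ∈ Finset.Ico (n + 1) (2 * n + 2),
            y ^ j * y⁻¹ ^ (2 * n + 1 - j) * ((2 * n + 1).choose j : ℂ) := by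
    rw [Finset.range_eq_Ico, ← Finset.sum_Ico_consecutive _ (Nat.zero_le (n+1)) (by omega), Finset.range_eq_Ico]
  rw [hsplit, Finset.sum_Ico_eq_sum_range]
  have h3 : 2 * n + 2 - (n + 1) = n + 1 := by omega
  rw [h3]
  rw [← Finset.sum_range_reflect
    (fun j => y ^ j * y⁻¹ ^ (2 * n + 1 - j) * ((2 * n + 1).choose j : ℂ)) (n + 1)]
  rw [← Finset.sum_add_distrib]
  apply Finset.sum_congr rfl
  intro k hk
  have hk' : k ≤ n := by simpa using Nat.lt_succ_iff.mp (Finset.mem_range.mp hk)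
  have e0 : n + 1 - 1 - k = n - k := by omega
  have e1 : 2 * n + 1 - (n - k) = n + 1 + k := by omega
  have e2 : 2 * n + 1 - (n + 1 + k) = n - k := by omega
  have e3 : ((2 * n + 1).choose (n + 1 + k)) = (2 * n + 1).choose (n - k) := by
    rw [← Nat.choose_symm (by omega : n + 1 + k ≤ 2 * n + 1), e2]
  have e4 : y ^ (n + 1 + k) * y⁻¹ ^ (n - k) = y ^ (2 * k + 1) := by
    have h : n + 1 + k = (2 * k + 1) + (n - k) := by omega
    rw [h, pow_add, mul_assoc, ← mul_pow, hinv, one_pow, mul_one]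
  have e5 : y ^ (n - k) * y⁻¹ ^ (n + 1 + k) = y⁻¹ ^ (2 * k + 1) := by
    have h : n + 1 + k = (n - k) + (2 * k + 1) := by omega
    rw [h, pow_add, ← mul_assoc, ← mul_pow, hinv, one_pow, one_mul]
  rw [e0, e1, e2, e3, e4, e5]
  push_cast
  ring

theorem pow_odd_eq_sum_lucas
    (L : ℕ → Polynomial ℚ)
    (h0 : L 0 = 1) (h1 : L 1 = X) (h2 : L 2 = X ^ 2 - 2)
    (hrec : ∀ n, L (n + 3) = X * L (n + 2) - L (n + 1)) :
    ∀ n, ∑ k ∈ range (n + 1), (((2 * n + 1).choose (n - k) : ℚ)) • L (2 * k + 1) =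
      (X : Polynomial ℚ) ^ (2 * n + 1) := by
  intro n
  apply Polynomial.map_injective (algebraMap ℚ ℂ) (algebraMap ℚ ℂ).injective
  apply Polynomial.funext
  intro x
  rw [Polynomial.eval_map, Polynomial.eval_map, ← Polynomial.aeval_def, ← Polynomial.aeval_def]
  obtain ⟨s, hs⟩ := IsAlgClosed.exists_pow_nat_eq (k := ℂ) (x ^ 2 - 4) (n := 2) (by norm_num)
  have hmul : (x + s) / 2 * ((x - s) / 2) = 1 := by
    linear_combination (-1/4) * hs
  set y : ℂ := (x + s) / 2 with hy_def
  have hy : y ≠ 0 := left_ne_zero_of_mul_eq_one hmul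
  have hinv : y⁻¹ = (x - s) / 2 := inv_eq_of_mul_eq_one_right hmul
  have hx : y + y⁻¹ = x := by rw [hinv, hy_def]; ring
  rw [map_sum, map_pow, aeval_X, ← hx]
  rw [← auxB y hy n]
  apply Finset.sum_congr rfl
  intro k hk
  rw [map_smul, auxA L h1 h2 hrec y hy (2 * k)]
  rw [Rat.smul_def]
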